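/- In a rotationally asymmetric configuration of finitely many distinct points on a circle, if there are exactly two undecided leaders, then they are not antipodal to each other. -/

import Mathlib

open Real
open scoped Classical

noncomputable section

/-- Clockwise angular distance from `p` to `q`, a real number in `[0, 2π)`. -/
def cw (p q : Real.Angle) : ℝ :=
  if 0 ≤ (q - p).toReal then (q - p).toReal else (q - p).toReal + 2 * π

/-- The sorted list of clockwise distances from `p` to the points of `S`. -/
def dists (S : Finset Real.Angle) (p : Real.Angle) : List ℝ :=
  (S.image (cw p)).sort (· ≤ ·)

/-- The clockwise angular-gap sequence of `p` with respect to the configuration `S`: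
the sequence of clockwise gaps between consecutive points, starting from `p`. -/
def gapSeq (S : Finset Real.Angle) (p : Real.Angle) : List ℝ :=
  List.zipWith (fun a b => a - b) ((dists S p).tail ++ [2 * π]) (dists S p)

/-- Lexicographic strict order on lists of reals. -/
def lexLt (a b : List ℝ) : Prop := List.Lex (· < ·) a b

/-- `L` is the true leader of `S`: its angular-gap sequence is lexicographically
strictly smallest. -/
def TrueLeader (S : Finset Real.Angle) (L : Real.Angle) : Prop :=
  L ∈ S ∧ ∀ r ∈ S, r ≠ L → lexLt (gapSeq S L) (gapSeq S r)

/-- `S` is rotationally asymmetric: no nontrivial rotation about the center fixes `S`. -/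
def RotAsym (S : Finset Real.Angle) : Prop :=
  ∀ θ : Real.Angle, θ ≠ 0 → S.image (· + θ) ≠ S

/-- The antipodal position of a point on the circle. -/
def antipode (p : Real.Angle) : Real.Angle := p + (π : Real.Angle)

/-- The hypothetical configuration in which the antipode of `r` is unoccupied. -/
def C0 (S : Finset Real.Angle) (r : Real.Angle) : Finset Real.Angle := S.erase (antipode r)

/-- The hypothetical configuration in which the antipode of `r` is occupied. -/
def C1 (S : Finset Real.Angle) (r : Real.Angle) : Finset Real.Angle := insert (antipode r) S

/-- `r` is an undecided leader: both hypothetical configurations are rotationally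
asymmetric and `r` is the true leader of exactly one of them. -/
def Undecided (S : Finset Real.Angle) (r : Real.Angle) : Prop :=
  r ∈ S ∧ RotAsym (C0 S r) ∧ RotAsym (C1 S r) ∧
    Xor' (TrueLeader (C0 S r) r) (TrueLeader (C1 S r) r)

/-- `r` is a cognizant leader: `r` is the true leader in every consistent
(hypothetical) configuration. -/
def Cognizant (S : Finset Real.Angle) (r : Real.Angle) : Prop :=
  r ∈ S ∧ (RotAsym (C0 S r) → TrueLeader (C0 S r) r) ∧
    (RotAsym (C1 S r) → TrueLeader (C1 S r) r)

/-- An expected leader is a cognizant leader or an undecided leader. -/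
def ExpectedLeader (S : Finset Real.Angle) (r : Real.Angle) : Prop :=
  Cognizant S r ∨ Undecided S r

-- ## Beats: the "min of symmetric difference" strict order on finsets of reals
def Beats (F G : Finset ℝ) : Prop :=
  ∃ β, β ∈ F ∧ β ∉ G ∧ ∀ t, t < β → (t ∈ F ↔ t ∈ G)

theorem Beats.asymm {F G : Finset ℝ} (h : Beats F G) (h' : Beats G F) : False := by
  obtain ⟨a, haF, haG, ha⟩ := h
  obtain ⟨b, hbG, hbF, hb⟩ := h'
  rcases lt_trichotomy a b with hab | hab | hab
  · exact haG ((hb a hab).2 haF)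
  · exact haG (hab ▸ hbG)
  · exact hbF ((ha b hab).2 hbG)

theorem beats_total {F G : Finset ℝ} (h : F ≠ G) : Beats F G ∨ Beats G F := by
  classical
  set W : Finset ℝ := (F ∪ G).filter (fun t => ¬(t ∈ F ↔ t ∈ G)) with hW
  have hWne : W.Nonempty := by
    by_contra hemp
    apply h
    ext t
    by_contra ht
    have htW : t ∈ W := by
      have htu : t ∈ F ∪ G := by
        simp only [Finset.mem_union]
        by_cases h1 : t ∈ F
        · exact Or.inl h1
        · by_cases h2 : t ∈ G
          · exact Or.inr h2
          · exact absurd (iff_of_false h1 h2) ht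
      simp [hW, Finset.mem_filter, htu, ht]
    exact hemp ⟨t, htW⟩
  set β := W.min' hWne with hβ
  have hβW : β ∈ W := Finset.min'_mem _ _
  have hβdiff : ¬(β ∈ F ↔ β ∈ G) := (Finset.mem_filter.1 hβW).2
  have hagree : ∀ t, t < β → (t ∈ F ↔ t ∈ G) := by
    intro t ht
    by_contra htd
    have : t ∈ W := by
      refine Finset.mem_filter.2 ⟨?_, htd⟩
      simp only [Finset.mem_union]
      by_cases h1 : t ∈ F
      · exact Or.inl h1
      · by_cases h2 : t ∈ G
        · exact Or.inr h2
        · exact absurd (iff_of_false h1 h2) htd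
    exact absurd (Finset.min'_le _ _ this) (not_le.2 ht)
  by_cases h1 : β ∈ F
  · have h2 : β ∉ G := fun h2 => hβdiff (iff_of_true h1 h2)
    exact Or.inl ⟨β, h1, h2, hagree⟩
  · have h2 : β ∈ G := by
      by_contra h2
      exact hβdiff (iff_of_false h1 h2)
    exact Or.inr ⟨β, h2, h1, fun t ht => (hagree t ht).symm⟩

theorem Beats.trans {F G H : Finset ℝ} (h1 : Beats F G) (h2 : Beats G H) : Beats F H := by
  obtain ⟨a, haF, haG, ha⟩ := h1
  obtain ⟨b, hbG, hbH, hb⟩ := h2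
  rcases lt_trichotomy a b with hab | hab | hab
  · exact ⟨a, haF, fun haH => haG ((hb a hab).2 haH),
      fun t ht => (ha t ht).trans (hb t (ht.trans hab))⟩
  · exact absurd (hab ▸ hbG) haG
  · exact ⟨b, (ha b hab).2 hbG, hbH,
      fun t ht => (ha t (ht.trans hab)).trans (hb t ht)⟩

theorem Beats.ne {F G : Finset ℝ} (h : Beats F G) : F ≠ G := by
  rintro rfl
  obtain ⟨a, haF, haG, _⟩ := h
  exact haG haF

theorem Beats.irrefl {F : Finset ℝ} (h : Beats F F) : False := h.ne rfl

-- ## List.Lex basics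
theorem lex_cons_iff {a b : ℝ} {u v : List ℝ} :
    lexLt (a :: u) (b :: v) ↔ a < b ∨ (a = b ∧ lexLt u v) := by
  constructor
  · intro h
    cases h with
    | rel h => exact Or.inl h
    | cons h => exact Or.inr ⟨rfl, h⟩
  · rintro (h | ⟨rfl, h⟩)
    · exact List.Lex.rel h
    · exact List.Lex.cons h

theorem lex_nil {l : List ℝ} : ¬ lexLt l [] := by
  intro h; cases h

-- ## sort of a nonempty finset
theorem sort_eq_min'_cons {F : Finset ℝ} (hF : F.Nonempty) :
    F.sort (· ≤ ·) = F.min' hF :: (F.erase (F.min' hF)).sort (· ≤ ·) := by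
  classical
  have h1 : F = insert (F.min' hF) (F.erase (F.min' hF)) :=
    (Finset.insert_erase (F.min'_mem hF)).symm
  conv_lhs => rw [h1]
  rw [Finset.sort_insert]
  · intro b hb
    exact F.min'_le b (Finset.mem_of_mem_erase hb)
  · exact Finset.notMem_erase _ _

-- ## main bridge: lex on sorted lists ↔ Beats
theorem sort_lex_iff_beats : ∀ n (F G : Finset ℝ), F.card = n → G.card = n →
    (lexLt (F.sort (· ≤ ·)) (G.sort (· ≤ ·)) ↔ Beats F G) := by
  intro n
  induction n with
  | zero =>
    intro F G hF hG
    rw [Finset.card_eq_zero] at hF hG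
    subst hF; subst hG
    simp only [Finset.sort_empty]
    constructor
    · intro h; cases h
    · rintro ⟨a, ha, _⟩; cases ha
  | succ n ih =>
    intro F G hF hG
    have hFne : F.Nonempty := Finset.card_pos.1 (by omega)
    have hGne : G.Nonempty := Finset.card_pos.1 (by omega)
    set a := F.min' hFne with ha
    set b := G.min' hGne with hb
    rw [sort_eq_min'_cons hFne, sort_eq_min'_cons hGne]
    rcases lt_trichotomy a b with hab | hab | hab
    · constructor
      · intro _
        refine ⟨a, F.min'_mem hFne, ?_, ?_⟩
        · intro haG
          exact absurd (G.min'_le a haG) (not_le.2 hab)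
        · intro t ht
          constructor
          · intro htF; exact absurd (F.min'_le t htF) (not_le.2 ht)
          · intro htG; exact absurd (G.min'_le t htG) (not_le.2 (ht.trans hab))
      · intro _; exact List.Lex.rel hab
    · -- equal minima: recurse
      have hrec := ih (F.erase a) (G.erase b)
        (by rw [Finset.card_erase_of_mem (F.min'_mem hFne)]; omega)
        (by rw [Finset.card_erase_of_mem (G.min'_mem hGne)]; omega)
      rw [lex_cons_iff]
      constructor
      · rintro (h | ⟨_, h⟩)
        · exact absurd hab (ne_of_lt h)
        · obtain ⟨β, hβF, hβG, hβ⟩ := hrec.1 h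
          refine ⟨β, Finset.mem_of_mem_erase hβF, ?_, ?_⟩
          · intro hβinG
            have hβa : β ≠ a := (Finset.ne_of_mem_erase hβF)
            exact hβG (Finset.mem_erase.2 ⟨hab ▸ hβa, hβinG⟩)
          · intro t ht
            by_cases hta : t = a
            · subst hta
              refine iff_of_true (F.min'_mem hFne) ?_
              exact hab ▸ G.min'_mem hGne
            · have := hβ t ht
              rw [Finset.mem_erase, Finset.mem_erase] at this
              constructor
              · intro htF; exact (this.1 ⟨hta, htF⟩).2
              · intro htG; exact (this.2 ⟨hab ▸ hta, htG⟩).2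
      · rintro ⟨β, hβF, hβG, hβ⟩
        right
        refine ⟨hab, hrec.2 ⟨β, ?_, ?_, ?_⟩⟩
        · refine Finset.mem_erase.2 ⟨?_, hβF⟩
          intro hβa
          exact hβG (hβa ▸ hab ▸ G.min'_mem hGne)
        · intro hβGe
          exact hβG (Finset.mem_of_mem_erase hβGe)
        · intro t ht
          rw [Finset.mem_erase, Finset.mem_erase]
          have := hβ t ht
          constructor
          · rintro ⟨hta, htF⟩; exact ⟨hab ▸ hta, this.1 htF⟩
          · rintro ⟨hta, htG⟩; exact ⟨hab ▸ hta, this.2 htG⟩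
    · -- b < a : both sides false
      constructor
      · intro h
        rcases lex_cons_iff.1 h with h1 | ⟨h1, _⟩
        · linarith
        · simp only [← ha, ← hb] at h1; linarith
      · rintro ⟨β, hβF, hβG, hβ⟩
        have hbβ : b < β := lt_of_lt_of_le hab (F.min'_le β hβF)
        have : b ∈ F := (hβ b hbβ).2 (G.min'_mem hGne)
        exact absurd (F.min'_le b this) (not_le.2 hab)

-- gs lemmas and gapSeq bridge; cw lemmas
section Part2

def gs (l : List ℝ) : List ℝ := List.zipWith (fun a b => a - b) (l.tail ++ [2 * π]) l

theorem gapSeq_eq_gs (S : Finset Real.Angle) (p : Real.Angle) :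
    gapSeq S p = gs (dists S p) := rfl

theorem gs_single (a : ℝ) : gs [a] = [2 * π - a] := rfl

theorem gs_cons_cons (a b : ℝ) (t : List ℝ) : gs (a :: b :: t) = (b - a) :: gs (b :: t) := rfl

theorem lex_nil_nil : ¬ lexLt ([] : List ℝ) [] := by intro h; cases h

theorem gs_lex : ∀ (t₁ t₂ : List ℝ), t₁.length = t₂.length → ∀ a : ℝ,
    (lexLt (gs (a :: t₁)) (gs (a :: t₂)) ↔ lexLt t₁ t₂) := by
  intro t₁
  induction t₁ with
  | nil =>
    intro t₂ hlen a
    have ht₂ : t₂ = [] := List.length_eq_zero_iff.1 hlen.symm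
    subst ht₂
    rw [gs_single]
    constructor
    · intro h
      rcases lex_cons_iff.1 h with h1 | ⟨_, h1⟩
      · linarith
      · exact absurd h1 lex_nil_nil
    · intro h; exact absurd h lex_nil_nil
  | cons b t₁' ih =>
    intro t₂ hlen a
    rcases t₂ with _ | ⟨c, t₂'⟩
    · simp at hlen
    · have hlen' : t₁'.length = t₂'.length := by simpa using hlen
      rw [gs_cons_cons, gs_cons_cons, lex_cons_iff, lex_cons_iff]
      constructor
      · rintro (h1 | ⟨h1, h2⟩)
        · exact Or.inl (by linarith)
        · have hbc : b = c := by linarith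
          subst hbc
          exact Or.inr ⟨rfl, (ih t₂' hlen' b).1 h2⟩
      · rintro (h1 | ⟨h1, h2⟩)
        · exact Or.inl (by linarith)
        · subst h1
          exact Or.inr ⟨rfl, (ih t₂' hlen' b).2 h2⟩

theorem beats_erase_shared {F G : Finset ℝ} {c : ℝ} (hcF : c ∈ F) (hcG : c ∈ G) :
    Beats (F.erase c) (G.erase c) ↔ Beats F G := by
  constructor
  · rintro ⟨β, hβF, hβG, hβ⟩
    have hβc : β ≠ c := Finset.ne_of_mem_erase hβF
    refine ⟨β, Finset.mem_of_mem_erase hβF, ?_, ?_⟩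
    · intro h; exact hβG (Finset.mem_erase.2 ⟨hβc, h⟩)
    · intro t ht
      by_cases htc : t = c
      · subst htc; exact iff_of_true hcF hcG
      · have := hβ t ht
        rw [Finset.mem_erase, Finset.mem_erase] at this
        constructor
        · intro h; exact (this.1 ⟨htc, h⟩).2
        · intro h; exact (this.2 ⟨htc, h⟩).2
  · rintro ⟨β, hβF, hβG, hβ⟩
    have hβc : β ≠ c := fun h => hβG (h ▸ hcG)
    refine ⟨β, Finset.mem_erase.2 ⟨hβc, hβF⟩, ?_, ?_⟩
    · intro h; exact hβG (Finset.mem_of_mem_erase h)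
    · intro t ht
      rw [Finset.mem_erase, Finset.mem_erase]
      have := hβ t ht
      constructor
      · rintro ⟨htc, h⟩; exact ⟨htc, this.1 h⟩
      · rintro ⟨htc, h⟩; exact ⟨htc, this.2 h⟩

-- cw basic facts
theorem cw_nonneg (p q : Real.Angle) : 0 ≤ cw p q := by
  unfold cw
  split_ifs with h
  · exact h
  · have := Real.Angle.neg_pi_lt_toReal (q - p)
    have hπ := Real.pi_pos
    linarith

theorem cw_lt_two_pi (p q : Real.Angle) : cw p q < 2 * π := by
  unfold cw
  have h1 := Real.Angle.toReal_le_pi (q - p)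
  have hπ := Real.pi_pos
  split_ifs with h
  · linarith
  · push_neg at h
    linarith

theorem cw_coe (p q : Real.Angle) : ((cw p q : ℝ) : Real.Angle) = q - p := by
  unfold cw
  split_ifs with h
  · exact Real.Angle.coe_toReal _
  · rw [Real.Angle.coe_add, Real.Angle.coe_two_pi, add_zero]
    exact Real.Angle.coe_toReal _

theorem angle_coe_inj {a b : ℝ} (ha0 : 0 ≤ a) (ha2 : a < 2 * π) (hb0 : 0 ≤ b)
    (hb2 : b < 2 * π) (h : ((a : ℝ) : Real.Angle) = (b : ℝ)) : a = b := by
  obtain ⟨k, hk⟩ := Real.Angle.angle_eq_iff_two_pi_dvd_sub.1 h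
  have hπ := Real.pi_pos
  by_contra hne
  have hk0 : k ≠ 0 := by
    rintro rfl
    simp at hk
    exact hne (by linarith)
  have h1 : (1 : ℝ) ≤ |(k : ℝ)| := by
    have := Int.one_le_abs hk0
    calc (1:ℝ) = ((1:ℤ) : ℝ) := by norm_num
    _ ≤ ((|k| : ℤ) : ℝ) := by exact_mod_cast this
    _ = |(k : ℝ)| := by push_cast; rfl
  have h2 : |a - b| < 2 * π := by
    rw [abs_lt]; constructor <;> linarith
  rw [hk, abs_mul] at h2
  have : 2 * π * 1 ≤ 2 * π * |(k:ℝ)| := by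
    apply mul_le_mul_of_nonneg_left h1
    linarith
  have h3 : |2 * π| = 2 * π := abs_of_pos (by linarith)
  rw [h3] at h2
  linarith

theorem cw_self (p : Real.Angle) : cw p p = 0 := by
  unfold cw
  simp [Real.Angle.toReal_zero]

theorem cw_injective (p : Real.Angle) : Function.Injective (cw p) := by
  intro q q' h
  have h1 : ((cw p q : ℝ) : Real.Angle) = ((cw p q' : ℝ) : Real.Angle) := by rw [h]
  rw [cw_coe, cw_coe] at h1
  have := sub_left_injective h1
  exact this

theorem cw_eq_zero_iff {p q : Real.Angle} : cw p q = 0 ↔ q = p := by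
  constructor
  · intro h
    have := cw_self p
    exact cw_injective p (h.trans this.symm)
  · rintro rfl; exact cw_self _

end Part2

section Part3

def ushift (c t : ℝ) : ℝ := if t + c < 2 * π then t + c else t + c - 2 * π

def shf (c t : ℝ) : ℝ := if t - c < 0 then t - c + 2 * π else t - c

def dnn (c : ℝ) (X : Finset ℝ) : Finset ℝ := X.image (shf c)

theorem shf_bounds {c t : ℝ} (hc0 : 0 ≤ c) (hc2 : c < 2 * π) (ht0 : 0 ≤ t) (ht2 : t < 2 * π) :
    0 ≤ shf c t ∧ shf c t < 2 * π := by
  unfold shf; split_ifs with h <;> constructor <;> linarith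

theorem ushift_bounds {c t : ℝ} (hc0 : 0 ≤ c) (hc2 : c < 2 * π) (ht0 : 0 ≤ t) (ht2 : t < 2 * π) :
    0 ≤ ushift c t ∧ ushift c t < 2 * π := by
  unfold ushift; split_ifs with h <;> constructor <;> linarith

theorem ushift_shf {c s : ℝ} (hc0 : 0 ≤ c) (hc2 : c < 2 * π) (hs0 : 0 ≤ s) (hs2 : s < 2 * π) :
    ushift c (shf c s) = s := by
  unfold ushift shf; split_ifs with h1 h2 h2 <;> linarith

theorem shf_ushift {c t : ℝ} (hc0 : 0 ≤ c) (hc2 : c < 2 * π) (ht0 : 0 ≤ t) (ht2 : t < 2 * π) :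
    shf c (ushift c t) = t := by
  unfold ushift shf; split_ifs with h1 h2 h2 <;> linarith

theorem mem_dnn {c t : ℝ} {X : Finset ℝ} (hX : ∀ u ∈ X, 0 ≤ u ∧ u < 2 * π)
    (hc0 : 0 ≤ c) (hc2 : c < 2 * π) (ht0 : 0 ≤ t) (ht2 : t < 2 * π) :
    t ∈ dnn c X ↔ ushift c t ∈ X := by
  unfold dnn
  rw [Finset.mem_image]
  constructor
  · rintro ⟨s, hsX, rfl⟩
    rw [ushift_shf hc0 hc2 (hX s hsX).1 (hX s hsX).2]
    exact hsX
  · intro h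
    exact ⟨ushift c t, h, shf_ushift hc0 hc2 ht0 ht2⟩

theorem dnn_bounds {c : ℝ} {X : Finset ℝ} (hX : ∀ u ∈ X, 0 ≤ u ∧ u < 2 * π)
    (hc0 : 0 ≤ c) (hc2 : c < 2 * π) : ∀ t ∈ dnn c X, 0 ≤ t ∧ t < 2 * π := by
  intro t ht
  obtain ⟨s, hsX, rfl⟩ := Finset.mem_image.1 ht
  exact shf_bounds hc0 hc2 (hX s hsX).1 (hX s hsX).2

theorem not_mem_of_neg {c : ℝ} {X : Finset ℝ} (hX : ∀ u ∈ X, 0 ≤ u ∧ u < 2 * π)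
    {t : ℝ} (ht : t < 0) : t ∉ X := fun h => absurd (hX t h).1 (not_le.2 ht)

theorem ushift_ushift {c d t : ℝ} (hc0 : 0 ≤ c) (hc2 : c < 2 * π) (hd0 : 0 ≤ d)
    (hd2 : d < 2 * π) (ht0 : 0 ≤ t) (ht2 : t < 2 * π) :
    ushift d (ushift c t) = ushift (ushift d c) t := by
  unfold ushift; split_ifs <;> linarith

theorem ushift_comm (c t : ℝ) : ushift c t = ushift t c := by
  unfold ushift; rw [add_comm]

theorem dnn_dnn {c d : ℝ} {X : Finset ℝ} (hX : ∀ u ∈ X, 0 ≤ u ∧ u < 2 * π)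
    (hc0 : 0 ≤ c) (hc2 : c < 2 * π) (hd0 : 0 ≤ d) (hd2 : d < 2 * π) :
    dnn d (dnn c X) = dnn (ushift d c) X := by
  have he := ushift_bounds hd0 hd2 hc0 hc2
  ext t
  by_cases ht : 0 ≤ t ∧ t < 2 * π
  · rw [mem_dnn (dnn_bounds hX hc0 hc2) hd0 hd2 ht.1 ht.2,
      mem_dnn hX he.1 he.2 ht.1 ht.2]
    by_cases hut : 0 ≤ ushift d t ∧ ushift d t < 2 * π
    · rw [mem_dnn hX hc0 hc2 hut.1 hut.2]
      have key : ushift c (ushift d t) = ushift (ushift d c) t := by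
        rw [ushift_ushift hd0 hd2 hc0 hc2 ht.1 ht.2, ushift_comm c d]
      rw [key]
    · exact absurd (ushift_bounds hd0 hd2 ht.1 ht.2) hut
  · constructor
    · intro h
      exact absurd (dnn_bounds (dnn_bounds hX hc0 hc2) hd0 hd2 t h) ht
    · intro h
      exact absurd (dnn_bounds hX he.1 he.2 t h) ht

theorem dnn_zero {X : Finset ℝ} (hX : ∀ u ∈ X, 0 ≤ u ∧ u < 2 * π) : dnn 0 X = X := by
  unfold dnn
  have : ∀ u ∈ X, shf 0 u = u := by
    intro u hu
    unfold shf
    have := hX u hu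
    split_ifs with h <;> linarith
  rw [Finset.image_congr (fun u hu => this u hu)]
  exact Finset.image_id

theorem shf_coe (c t : ℝ) : ((shf c t : ℝ) : Real.Angle) = (t : Real.Angle) - (c : Real.Angle) := by
  unfold shf
  split_ifs with h
  · rw [Real.Angle.coe_add, Real.Angle.coe_two_pi, add_zero, Real.Angle.coe_sub]
  · rw [Real.Angle.coe_sub]

theorem cw_cocycle (p q s : Real.Angle) : cw q s = shf (cw p q) (cw p s) := by
  have h1 := shf_bounds (cw_nonneg p q) (cw_lt_two_pi p q) (cw_nonneg p s) (cw_lt_two_pi p s)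
  apply angle_coe_inj (cw_nonneg q s) (cw_lt_two_pi q s) h1.1 h1.2
  rw [cw_coe, shf_coe, cw_coe, cw_coe]
  abel

theorem image_cw_eq_dnn (T : Finset Real.Angle) (p q : Real.Angle) :
    T.image (cw q) = dnn (cw p q) (T.image (cw p)) := by
  unfold dnn
  rw [Finset.image_image]
  apply Finset.image_congr
  intro s _
  exact cw_cocycle p q s

theorem image_cw_bounds (T : Finset Real.Angle) (p : Real.Angle) :
    ∀ u ∈ T.image (cw p), 0 ≤ u ∧ u < 2 * π := by
  intro u hu
  obtain ⟨s, _, rfl⟩ := Finset.mem_image.1 hu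
  exact ⟨cw_nonneg p s, cw_lt_two_pi p s⟩

-- the full lex bridge
theorem lexLt_gapSeq_iff {S T : Finset Real.Angle} {p q : Real.Angle}
    (hp : p ∈ S) (hq : q ∈ T) (hcard : S.card = T.card) :
    lexLt (gapSeq S p) (gapSeq T q) ↔ Beats (S.image (cw p)) (T.image (cw q)) := by
  set F := S.image (cw p) with hF
  set G := T.image (cw q) with hG
  have hF0 : (0 : ℝ) ∈ F := Finset.mem_image.2 ⟨p, hp, cw_self p⟩
  have hG0 : (0 : ℝ) ∈ G := Finset.mem_image.2 ⟨q, hq, cw_self q⟩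
  have hFne : F.Nonempty := ⟨0, hF0⟩
  have hGne : G.Nonempty := ⟨0, hG0⟩
  have hFmin : F.min' hFne = 0 := by
    apply le_antisymm (Finset.min'_le _ _ hF0)
    apply Finset.le_min'
    intro y hy
    exact (image_cw_bounds S p y hy).1
  have hGmin : G.min' hGne = 0 := by
    apply le_antisymm (Finset.min'_le _ _ hG0)
    apply Finset.le_min'
    intro y hy
    exact (image_cw_bounds T q y hy).1
  have hcF : F.card = S.card := Finset.card_image_of_injective _ (cw_injective p)
  have hcG : G.card = T.card := Finset.card_image_of_injective _ (cw_injective q)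
  have hdist1 : dists S p = 0 :: (F.erase 0).sort (· ≤ ·) := by
    unfold dists
    rw [← hF, sort_eq_min'_cons hFne, hFmin]
  have hdist2 : dists T q = 0 :: (G.erase 0).sort (· ≤ ·) := by
    unfold dists
    rw [← hG, sort_eq_min'_cons hGne, hGmin]
  rw [gapSeq_eq_gs, gapSeq_eq_gs, hdist1, hdist2]
  have hlen : ((F.erase 0).sort (· ≤ ·)).length = ((G.erase 0).sort (· ≤ ·)).length := by
    rw [Finset.length_sort, Finset.length_sort, Finset.card_erase_of_mem hF0,
      Finset.card_erase_of_mem hG0, hcF, hcG, hcard]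
  rw [gs_lex _ _ hlen 0]
  rw [sort_lex_iff_beats ((F.erase 0).card) _ _ rfl
    (by rw [Finset.card_erase_of_mem hF0, Finset.card_erase_of_mem hG0, hcF, hcG, hcard])]
  exact beats_erase_shared hF0 hG0

-- the TrueLeader bridge
theorem trueLeader_iff {T : Finset Real.Angle} {p : Real.Angle} (hp : p ∈ T) :
    TrueLeader T p ↔ ∀ x ∈ T.image (cw p), x ≠ 0 →
      Beats (T.image (cw p)) (dnn x (T.image (cw p))) := by
  constructor
  · rintro ⟨-, h⟩
    intro x hx hx0
    obtain ⟨q, hq, rfl⟩ := Finset.mem_image.1 hx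
    have hqp : q ≠ p := fun hqp => hx0 (hqp ▸ cw_self p)
    rw [← image_cw_eq_dnn T p q]
    exact (lexLt_gapSeq_iff hp hq rfl).1 (h q hq hqp)
  · intro h
    refine ⟨hp, ?_⟩
    intro q hq hqp
    have hx : cw p q ∈ T.image (cw p) := Finset.mem_image.2 ⟨q, hq, rfl⟩
    have hx0 : cw p q ≠ 0 := fun h0 => hqp (cw_eq_zero_iff.1 h0)
    rw [lexLt_gapSeq_iff hp hq rfl, image_cw_eq_dnn T p q]
    exact h _ hx hx0

end Part3

section Part4

def Qpred (X : Finset ℝ) : Prop := ∀ x ∈ X, x ≠ 0 → Beats X (dnn x X)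

def Ppred (X : Finset ℝ) : Prop :=
  ∀ x ∈ X.erase π, x ≠ 0 → Beats (X.erase π) (dnn x (X.erase π))

theorem pi_lt_two_pi : π < 2 * π := by have := Real.pi_pos; linarith

theorem erase_bounds {X : Finset ℝ} (hX : ∀ u ∈ X, 0 ≤ u ∧ u < 2 * π) (e : ℝ) :
    ∀ u ∈ X.erase e, 0 ≤ u ∧ u < 2 * π :=
  fun u hu => hX u (Finset.mem_of_mem_erase hu)

theorem dnn_erase {X : Finset ℝ} (hX : ∀ u ∈ X, 0 ≤ u ∧ u < 2 * π) {c e : ℝ}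
    (hc0 : 0 ≤ c) (hc2 : c < 2 * π) (he0 : 0 ≤ e) (he2 : e < 2 * π) :
    dnn c (X.erase e) = (dnn c X).erase (shf c e) := by
  ext t
  by_cases ht : 0 ≤ t ∧ t < 2 * π
  · rw [mem_dnn (erase_bounds hX e) hc0 hc2 ht.1 ht.2, Finset.mem_erase,
      Finset.mem_erase, mem_dnn hX hc0 hc2 ht.1 ht.2]
    have hkey : ushift c t = e ↔ t = shf c e := by
      constructor
      · intro h
        rw [← h, shf_ushift hc0 hc2 ht.1 ht.2]
      · rintro rfl
        exact ushift_shf hc0 hc2 he0 he2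
    simp only [ne_eq, hkey]
  · constructor
    · intro h
      exact absurd (dnn_bounds (erase_bounds hX e) hc0 hc2 t h) ht
    · intro h
      exact absurd (dnn_bounds hX hc0 hc2 t (Finset.mem_of_mem_erase h)) ht

/-- K*: the agreement between the views of `0` and `x` cannot extend strictly past
`2π - x` (the position of `0` as seen from `x`). -/
theorem kstar {X : Finset ℝ} (hX : ∀ u ∈ X, 0 ≤ u ∧ u < 2 * π) (h0 : (0:ℝ) ∈ X)
    (hQ : Qpred X) {x β : ℝ} (hx : x ∈ X) (hx0 : x ≠ 0) (hβX : β ∈ X)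
    (hβd : β ∉ dnn x X) (hag : ∀ t, t < β → (t ∈ X ↔ t ∈ dnn x X)) :
    β ≤ 2 * π - x := by
  by_contra hcon
  push_neg at hcon
  obtain ⟨hx0', hx2⟩ := hX x hx
  have hxpos : 0 < x := lt_of_le_of_ne hx0' (Ne.symm hx0)
  set w := 2 * π - x with hw
  have hw0 : 0 < w := by simp [hw]; linarith
  have hw2 : w < 2 * π := by simp [hw]; linarith
  obtain ⟨hβ0, hβ2⟩ := hX β hβX
  -- w ∈ dnn x X
  have hwd : w ∈ dnn x X := by
    rw [mem_dnn hX hx0' hx2 hw0.le hw2]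
    have : ushift x w = 0 := by
      unfold ushift
      split_ifs with h <;> [linarith; linarith]
    rw [this]; exact h0
  have hwX : w ∈ X := (hag w hcon).2 hwd
  have hQw := hQ w hwX (ne_of_gt hw0)
  -- build the reverse Beats and contradict
  set t₀ := β - w with ht₀
  have ht₀0 : 0 < t₀ := by simp [ht₀]; linarith
  have ht₀2 : t₀ < 2 * π := by simp [ht₀]; linarith
  have ht₀d : t₀ ∈ dnn w X := by
    rw [mem_dnn hX hw0.le hw2 ht₀0.le ht₀2]
    have : ushift w t₀ = β := by
      unfold ushift
      split_ifs with h <;> [linarith; linarith]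
    rw [this]; exact hβX
  have ht₀X : t₀ ∉ X := by
    rw [mem_dnn hX hx0' hx2 hβ0 hβ2] at hβd
    have : ushift x β = t₀ := by
      unfold ushift
      rw [if_neg (by linarith)]
      rw [ht₀, hw]; ring
    rwa [this] at hβd
  have : Beats (dnn w X) X := by
    refine ⟨t₀, ht₀d, ht₀X, ?_⟩
    intro t ht
    by_cases ht0 : 0 ≤ t
    · have ht2 : t < 2 * π := by linarith
      rw [mem_dnn hX hw0.le hw2 ht0 ht2]
      have huw : ushift w t = t + w := by
        unfold ushift
        split_ifs with h <;> [rfl; linarith]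
      rw [huw]
      have htw : t + w < β := by linarith
      have h1 := hag (t + w) htw
      have h2 : (t + w) ∈ dnn x X ↔ t ∈ X := by
        rw [mem_dnn hX hx0' hx2 (by linarith) (by linarith)]
        have : ushift x (t + w) = t := by
          unfold ushift
          rw [if_neg (by linarith)]
          rw [hw]; ring
        rw [this]
      rw [← h1.trans h2]
    · push_neg at ht0
      constructor
      · intro h
        exact absurd (dnn_bounds hX hw0.le hw2 t h).1 (not_le.2 ht0)
      · intro h
        exact absurd (hX t h).1 (not_le.2 ht0)
  exact this.asymm hQw

/-- Core: a full true leader whose antipode is occupied is also the deaf leader. -/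
theorem core_QP {X : Finset ℝ} (hX : ∀ u ∈ X, 0 ≤ u ∧ u < 2 * π) (h0 : (0:ℝ) ∈ X)
    (hπX : π ∈ X) (hQ : Qpred X) : Ppred X := by
  have hπ0 : 0 ≤ π := Real.pi_pos.le
  have hπ2 : π < 2 * π := pi_lt_two_pi
  intro x hxE hx0
  have hx : x ∈ X := Finset.mem_of_mem_erase hxE
  have hxπ : x ≠ π := Finset.ne_of_mem_erase hxE
  obtain ⟨hx0', hx2⟩ := hX x hx
  have hxpos : 0 < x := lt_of_le_of_ne hx0' (Ne.symm hx0)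
  obtain ⟨μ, hμX, hμd, hμag⟩ := hQ x hx hx0
  obtain ⟨hμ0, hμ2⟩ := hX μ hμX
  rw [dnn_erase hX hx0' hx2 hπ0 hπ2]
  set px := shf x π with hpx
  -- px ∈ dnn x X always (π ∈ X)
  obtain ⟨hpx0, hpx2⟩ := shf_bounds hx0' hx2 hπ0 hπ2
  have hpxd : px ∈ dnn x X := by
    rw [mem_dnn hX hx0' hx2 hpx0 hpx2]
    rw [ushift_shf hx0' hx2 hπ0 hπ2]
    exact hπX
  have hμpx : μ ≠ px := fun h => hμd (h ▸ hpxd)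
  rcases lt_trichotomy x π with hxlt | hxeq | hxgt
  · -- x < π, px = π - x ∈ (0, π)
    have hpxval : px = π - x := by
      rw [hpx]; unfold shf
      split_ifs with h <;> [linarith; rfl]
    have hpxltπ : px < π := by rw [hpxval]; linarith
    rcases lt_or_gt_of_ne hμpx with hlt | hgt
    · -- μ < px
      refine ⟨μ, Finset.mem_erase.2 ⟨by linarith, hμX⟩, ?_, ?_⟩
      · intro h; exact hμd (Finset.mem_of_mem_erase h)
      · intro t ht
        rw [Finset.mem_erase, Finset.mem_erase]
        have h1 := hμag t ht
        constructor
        · rintro ⟨htπ, htX⟩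
          exact ⟨by linarith, h1.1 htX⟩
        · rintro ⟨htpx, htd⟩
          exact ⟨by linarith, h1.2 htd⟩
    · -- px < μ
      have hpxX : px ∈ X := (hμag px hgt).2 hpxd
      refine ⟨px, Finset.mem_erase.2 ⟨by linarith, hpxX⟩, Finset.notMem_erase _ _, ?_⟩
      intro t ht
      rw [Finset.mem_erase, Finset.mem_erase]
      have h1 := hμag t (by linarith)
      constructor
      · rintro ⟨htπ, htX⟩
        exact ⟨by linarith, h1.1 htX⟩
      · rintro ⟨htpx, htd⟩
        exact ⟨by linarith, h1.2 htd⟩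
  · exact absurd hxeq hxπ
  · -- π < x : use kstar, μ ≤ 2π - x < π < px
    have hμle : μ ≤ 2 * π - x := kstar hX h0 hQ hx hx0 hμX hμd hμag
    have hμltπ : μ < π := by linarith
    have hpxval : px = π - x + 2 * π := by
      rw [hpx]; unfold shf
      split_ifs with h <;> [rfl; linarith]
    have hpxgtπ : π < px := by rw [hpxval]; linarith
    refine ⟨μ, Finset.mem_erase.2 ⟨by linarith, hμX⟩, ?_, ?_⟩
    · intro h; exact hμd (Finset.mem_of_mem_erase h)
    · intro t ht
      rw [Finset.mem_erase, Finset.mem_erase]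
      have h1 := hμag t ht
      constructor
      · rintro ⟨htπ, htX⟩
        exact ⟨by linarith, h1.1 htX⟩
      · rintro ⟨htpx, htd⟩
        exact ⟨by linarith, h1.2 htd⟩

/-- Transfer: a deaf win of `0` against a far-half point is a full win. -/
theorem core_T1 {X : Finset ℝ} (hX : ∀ u ∈ X, 0 ≤ u ∧ u < 2 * π) (h0 : (0:ℝ) ∈ X)
    (hπX : π ∈ X) {x : ℝ} (hx : x ∈ X) (hxgt : π < x)
    (hB : Beats (X.erase π) (dnn x (X.erase π))) : Beats X (dnn x X) := by
  have hπ0 : 0 ≤ π := Real.pi_pos.le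
  have hπ2 : π < 2 * π := pi_lt_two_pi
  obtain ⟨hx0', hx2⟩ := hX x hx
  rw [dnn_erase hX hx0' hx2 hπ0 hπ2] at hB
  set px := shf x π with hpx
  have hpxval : px = π - x + 2 * π := by
    rw [hpx]; unfold shf
    split_ifs with h <;> [rfl; linarith]
  have hpxgtπ : π < px := by rw [hpxval]; linarith
  obtain ⟨m, hmE, hmd, hmag⟩ := hB
  have hmX : m ∈ X := Finset.mem_of_mem_erase hmE
  have hmπ : m ≠ π := Finset.ne_of_mem_erase hmE
  rcases lt_or_gt_of_ne hmπ with hmlt | hmgt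
  · -- m < π
    refine ⟨m, hmX, ?_, ?_⟩
    · intro h
      exact hmd (Finset.mem_erase.2 ⟨by linarith, h⟩)
    · intro t ht
      have h1 := hmag t ht
      rw [Finset.mem_erase, Finset.mem_erase] at h1
      constructor
      · intro htX
        exact (h1.1 ⟨by linarith, htX⟩).2
      · intro htd
        exact (h1.2 ⟨by linarith, htd⟩).2
  · -- π < m, witness π
    refine ⟨π, hπX, ?_, ?_⟩
    · intro h
      have : π ∈ (dnn x X).erase px := Finset.mem_erase.2 ⟨by linarith, h⟩
      have h2 := (hmag π hmgt).2 this
      exact (Finset.notMem_erase π X) h2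
    · intro t ht
      have h1 := hmag t (by linarith)
      rw [Finset.mem_erase, Finset.mem_erase] at h1
      constructor
      · intro htX
        exact (h1.1 ⟨by linarith, htX⟩).2
      · intro htd
        exact (h1.2 ⟨by linarith, htd⟩).2

end Part4

section Part5

theorem antipode_ne (r : Real.Angle) : antipode r ≠ r := by
  unfold antipode
  intro h
  have : (π : Real.Angle) = 0 := by
    have := congrArg (fun z => z - r) h
    simpa [add_comm, add_sub_cancel_left] using this
  exact Real.Angle.pi_ne_zero this

theorem antipode_antipode (r : Real.Angle) : antipode (antipode r) = r := by
  unfold antipode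
  rw [add_assoc, Real.Angle.coe_pi_add_coe_pi, add_zero]

theorem cw_antipode (r : Real.Angle) : cw r (antipode r) = π := by
  have h : (antipode r) - r = ((π : ℝ) : Real.Angle) := by
    unfold antipode; abel
  unfold cw
  rw [h, Real.Angle.toReal_pi, if_pos Real.pi_pos.le]

theorem cw_antipode' (r : Real.Angle) : cw (antipode r) r = π := by
  have hneg : (-(π : ℝ) : ℝ) = (π : ℝ) → True := fun _ => trivial
  have h : r - antipode r = ((π : ℝ) : Real.Angle) := by
    unfold antipode
    have h1 : r - (r + (π : ℝ)) = -((π : ℝ) : Real.Angle) := by abel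
    rw [h1, neg_eq_of_add_eq_zero_left Real.Angle.coe_pi_add_coe_pi]
  unfold cw
  rw [h, Real.Angle.toReal_pi, if_pos Real.pi_pos.le]

theorem stmt11' (S : Finset Real.Angle) (hasym : RotAsym S)
    (r₁ r₂ : Real.Angle) (hne : r₁ ≠ r₂)
    (hU1 : Undecided S r₁) (hU2 : Undecided S r₂) :
    r₂ ≠ antipode r₁ := by
  intro heq
  subst heq
  obtain ⟨hr1S, hA1, hB1, hXor1⟩ := hU1
  obtain ⟨hr2S, hA2, hB2, hXor2⟩ := hU2
  have hπ0 : (0:ℝ) ≤ π := Real.pi_pos.le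
  have hπ2 : π < 2 * π := pi_lt_two_pi
  have haa : antipode (antipode r₁) = r₁ := antipode_antipode r₁
  have hr1a : r₁ ≠ antipode r₁ := (antipode_ne r₁).symm
  have hC11 : C1 S r₁ = S := Finset.insert_eq_self.2 hr2S
  have hC12 : C1 S (antipode r₁) = S := by
    rw [C1, haa]; exact Finset.insert_eq_self.2 hr1S
  have hC02 : C0 S (antipode r₁) = S.erase r₁ := by rw [C0, haa]
  rw [show C0 S r₁ = S.erase (antipode r₁) from rfl, hC11] at hXor1
  rw [hC02, hC12] at hXor2
  set X := S.image (cw r₁) with hXdef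
  set Y := S.image (cw (antipode r₁)) with hYdef
  have hXb := image_cw_bounds S r₁
  have hYb := image_cw_bounds S (antipode r₁)
  have h0X : (0:ℝ) ∈ X := Finset.mem_image.2 ⟨r₁, hr1S, cw_self r₁⟩
  have h0Y : (0:ℝ) ∈ Y := Finset.mem_image.2 ⟨antipode r₁, hr2S, cw_self _⟩
  have hcwa : cw r₁ (antipode r₁) = π := cw_antipode r₁
  have hcwa' : cw (antipode r₁) r₁ = π := cw_antipode' r₁
  have hπX : π ∈ X := Finset.mem_image.2 ⟨antipode r₁, hr2S, hcwa⟩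
  have hπY : π ∈ Y := Finset.mem_image.2 ⟨r₁, hr1S, hcwa'⟩
  -- bridges
  have hQXiff : TrueLeader S r₁ ↔ Qpred X := trueLeader_iff hr1S
  have hQYiff : TrueLeader S (antipode r₁) ↔ Qpred Y := trueLeader_iff hr2S
  have himgX : (S.erase (antipode r₁)).image (cw r₁) = X.erase π := by
    rw [Finset.image_erase (cw_injective r₁), hcwa]
  have hPXiff : TrueLeader (S.erase (antipode r₁)) r₁ ↔ Ppred X := by
    have h := trueLeader_iff (T := S.erase (antipode r₁)) (p := r₁)
      (Finset.mem_erase.2 ⟨hr1a, hr1S⟩)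
    rw [himgX] at h
    exact h
  have himgY : (S.erase r₁).image (cw (antipode r₁)) = Y.erase π := by
    rw [Finset.image_erase (cw_injective (antipode r₁)), hcwa']
  have hPYiff : TrueLeader (S.erase r₁) (antipode r₁) ↔ Ppred Y := by
    have h := trueLeader_iff (T := S.erase r₁) (p := antipode r₁)
      (Finset.mem_erase.2 ⟨antipode_ne r₁, hr2S⟩)
    rw [himgY] at h
    exact h
  have hYX : Y = dnn π X := by
    rw [hYdef, hXdef, ← hcwa]
    exact image_cw_eq_dnn S r₁ (antipode r₁)
  have hXY : X = dnn π Y := by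
    rw [hYdef, hXdef, ← hcwa']
    exact image_cw_eq_dnn S (antipode r₁) r₁
  -- X ≠ Y from rotational asymmetry
  have hXneY : X ≠ Y := by
    intro hxy
    apply hasym (π : ℝ) Real.Angle.pi_ne_zero
    have hsub : S ⊆ S.image (· + ((π : ℝ) : Real.Angle)) := by
      intro q hq
      have hqY : cw (antipode r₁) q ∈ Y := Finset.mem_image.2 ⟨q, hq, rfl⟩
      rw [← hxy] at hqY
      obtain ⟨s, hsS, hcw⟩ := Finset.mem_image.1 hqY
      refine Finset.mem_image.2 ⟨s, hsS, ?_⟩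
      have h2 : (s : Real.Angle) - r₁ = q - antipode r₁ := by
        rw [← cw_coe r₁ s, ← cw_coe (antipode r₁) q, hcw]
      rw [sub_eq_iff_eq_add] at h2
      show s + ((π : ℝ) : Real.Angle) = q
      rw [h2]
      unfold antipode
      abel
    exact (Finset.eq_of_subset_of_card_le hsub Finset.card_image_le).symm
  -- extract (P ∧ ¬Q) for both worlds
  have hcX := core_QP hXb h0X hπX
  have hcY := core_QP hYb h0Y hπY
  have hPX : Ppred X ∧ ¬ Qpred X := by
    rcases hXor1 with ⟨h1, h2⟩ | ⟨h1, h2⟩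
    · exact ⟨hPXiff.1 h1, fun hq => h2 (hQXiff.2 hq)⟩
    · exact absurd (hPXiff.2 (hcX (hQXiff.1 h1))) h2
  have hPY : Ppred Y ∧ ¬ Qpred Y := by
    rcases hXor2 with ⟨h1, h2⟩ | ⟨h1, h2⟩
    · exact ⟨hPYiff.1 h1, fun hq => h2 (hQYiff.2 hq)⟩
    · exact absurd (hPYiff.2 (hcY (hQYiff.1 h1))) h2
  -- final contradiction
  rcases beats_total hXneY with hbt | hbt
  · apply hPX.2
    intro x hxX hx0
    obtain ⟨hx0', hx2⟩ := hXb x hxX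
    rcases lt_trichotomy x π with hlt | heqx | hgt
    · have hx' : x + π ∈ Y := by
        rw [hYX, mem_dnn hXb hπ0 hπ2 (by linarith) (by linarith)]
        have hu : ushift π (x + π) = x := by
          unfold ushift; rw [if_neg (by linarith)]; ring
        rw [hu]; exact hxX
      have hxpos : (0:ℝ) < x := lt_of_le_of_ne hx0' (Ne.symm hx0)
      have hppos : (0:ℝ) < π := Real.pi_pos
      have hne1 : x + π ≠ π := fun h => hx0 (by linarith)
      have hne0 : x + π ≠ 0 := by intro h; linarith
      have hT := core_T1 hYb h0Y hπY hx' (by linarith)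
        (hPY.1 (x + π) (Finset.mem_erase.2 ⟨hne1, hx'⟩) hne0)
      have hdd : dnn (x + π) Y = dnn x X := by
        rw [hYX, dnn_dnn hXb hπ0 hπ2 (by linarith : (0:ℝ) ≤ x + π) (by linarith)]
        have hu : ushift (x + π) π = x := by
          unfold ushift; rw [if_neg (by linarith)]; ring
        rw [hu]
      rw [hdd] at hT
      exact hbt.trans hT
    · rw [heqx, ← hYX]; exact hbt
    · exact core_T1 hXb h0X hπX hxX hgt
        (hPX.1 x (Finset.mem_erase.2 ⟨ne_of_gt hgt, hxX⟩) hx0)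
  · apply hPY.2
    intro y hyY hy0
    obtain ⟨hy0', hy2⟩ := hYb y hyY
    rcases lt_trichotomy y π with hlt | heqy | hgt
    · have hy' : y + π ∈ X := by
        rw [hXY, mem_dnn hYb hπ0 hπ2 (by linarith) (by linarith)]
        have hu : ushift π (y + π) = y := by
          unfold ushift; rw [if_neg (by linarith)]; ring
        rw [hu]; exact hyY
      have hypos : (0:ℝ) < y := lt_of_le_of_ne hy0' (Ne.symm hy0)
      have hppos : (0:ℝ) < π := Real.pi_pos
      have hne1 : y + π ≠ π := fun h => hy0 (by linarith)
      have hne0 : y + π ≠ 0 := by intro h; linarith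
      have hT := core_T1 hXb h0X hπX hy' (by linarith)
        (hPX.1 (y + π) (Finset.mem_erase.2 ⟨hne1, hy'⟩) hne0)
      have hdd : dnn (y + π) X = dnn y Y := by
        rw [hXY, dnn_dnn hYb hπ0 hπ2 (by linarith : (0:ℝ) ≤ y + π) (by linarith)]
        have hu : ushift (y + π) π = y := by
          unfold ushift; rw [if_neg (by linarith)]; ring
        rw [hu]
      rw [hdd] at hT
      exact hbt.trans hT
    · rw [heqy, ← hXY]; exact hbt
    · exact core_T1 hYb h0Y hπY hyY hgt
        (hPY.1 y (Finset.mem_erase.2 ⟨ne_of_gt hgt, hyY⟩) hy0)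

end Part5

theorem stmt11 (S : Finset Real.Angle) (hasym : RotAsym S)
    (r₁ r₂ : Real.Angle) (hne : r₁ ≠ r₂)
    (hU1 : Undecided S r₁) (hU2 : Undecided S r₂) :
    r₂ ≠ antipode r₁ :=
  stmt11' S hasym r₁ r₂ hne hU1 hU2
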